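/- Let w : ∏_k A_k → ∏_k X_k be an n-partite process function with components w_k : ∏_{j≠k} A_j → X_k, where A_k = Fin d_k, and for each party k and each setting x_k ∈ X_k let U_k^{x_k} be a unitary operator on ℂ^{d_k} := EuclideanSpace ℂ (Fin d_k) such that, writing (e_{a_k}) for the standard orthonormal basis, for all a_k, a'_k ∈ A_k and x_k, x'_k ∈ X_k with (a_k, x_k) ≠ (a'_k, x'_k): ⟪U_k^{x'_k} e_{a'_k}, U_k^{x_k} e_{a_k}⟫ = 0 if and only if (x'_k = x_k and a'_k ≠ a_k). Define local vectors |(a_k|x_k)⟩ := U_k^{x_k} e_{a_k} and the family of ∏_k d_k events (a | (w_k(a_{∖k}))_k) for a ∈ ∏_k A_k. Then this data is a complete unambiguous product basis: each setting family (|(a_k|x_k)⟩)_{a_k} is an orthonormal basis of ℂ^{d_k}, the events are pairwise distinct with pairwise orthogonal product vectors (for a ≠ a', ∏_k ⟪(a_k|w_k(a_{∖k})), (a'_k|w_k(a'_{∖k}))⟫ = 0), and the unambiguity condition holds. -/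

import Mathlib

noncomputable section
open scoped BigOperators

/-- A (multipartite) process function: for every local intervention
`f = (f_k)_k` there is exactly one fixed point `x` with `w (f x) = x`. -/
def IsProcessFunction {ι : Type} {A X : ι → Type}
    (w : (∀ k, A k) → ∀ k, X k) : Prop :=
  ∀ f : ∀ k, X k → A k, ∃! x : ∀ k, X k, (w fun k => f k (x k)) = x

/-- **Theorem 4: any process function, encoded by local unitaries satisfying
the unambiguity condition, yields a complete unambiguous product basis**:
with local vectors `|(a_k|x_k)⟩ := U_k^{x_k} e_{a_k}` and the `∏_k d_k`
events `(a | (w_k(a_{∖k}))_k)`, each setting family is an orthonormal basis,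
the events are pairwise distinct with pairwise orthogonal product vectors,
and the unambiguity condition holds. -/
theorem processFunction_to_unambiguous_basis
    {n : ℕ} (hn : 1 ≤ n) (d : Fin n → ℕ) (hd : ∀ k, 1 ≤ d k)
    (X : Fin n → Type) [∀ k, Fintype (X k)] [∀ k, Nonempty (X k)]
    -- the components of the process function, with outcome sets `A k = Fin (d k)`
    (w : ∀ k : Fin n, (∀ j : {j : Fin n // j ≠ k}, Fin (d j)) → X k)
    (hw : IsProcessFunction (A := fun k => Fin (d k)) (X := X)
      (fun (a : ∀ k, Fin (d k)) (k : Fin n) => w k (fun j => a j)))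
    -- local unitaries for each party and setting
    (U : ∀ k : Fin n, X k →
      (EuclideanSpace ℂ (Fin (d k)) ≃ₗᵢ[ℂ] EuclideanSpace ℂ (Fin (d k))))
    -- the unambiguity condition on the unitaries (Eq. (26)):
    -- for `(a_k, x_k) ≠ (a'_k, x'_k)`,
    -- `⟪U^{x'} e_{a'}, U^{x} e_{a}⟫ = 0 ↔ (x' = x ∧ a' ≠ a)`
    (hU : ∀ (k : Fin n) (a a' : Fin (d k)) (x x' : X k),
      (a, x) ≠ (a', x') →
      ((inner ℂ (U k x' (EuclideanSpace.single a' (1 : ℂ)))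
          (U k x (EuclideanSpace.single a (1 : ℂ))) : ℂ) = 0 ↔
        (x' = x ∧ a' ≠ a))) :
    -- each setting family is an orthonormal basis of `ℂ^{d_k}`
    (∀ (k : Fin n) (x : X k),
      Orthonormal ℂ (fun a : Fin (d k) =>
        U k x (EuclideanSpace.single a (1 : ℂ)))) ∧
    -- the events `a ↦ (a, (w_k(a_{∖k}))_k)` are pairwise distinct
    Function.Injective (fun a : ∀ k, Fin (d k) =>
      (a, fun k : Fin n => w k (fun j => a j))) ∧
    -- their product vectors are pairwise orthogonal
    (∀ a a' : ∀ k, Fin (d k), a ≠ a' →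
      (∏ k : Fin n,
        (inner ℂ (U k (w k fun j => a j) (EuclideanSpace.single (a k) (1 : ℂ)))
          (U k (w k fun j => a' j)
            (EuclideanSpace.single (a' k) (1 : ℂ))) : ℂ)) = 0) ∧
    -- and the unambiguity condition holds for the occurring labels
    (∀ (k : Fin n) (b b' : Fin (d k)) (x x' : X k),
      (∃ a : ∀ i, Fin (d i), a k = b ∧ w k (fun j => a j) = x) →
      (∃ a : ∀ i, Fin (d i), a k = b' ∧ w k (fun j => a j) = x') →
      U k x (EuclideanSpace.single b (1 : ℂ)) ≠
        U k x' (EuclideanSpace.single b' (1 : ℂ)) →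
      ((inner ℂ (U k x (EuclideanSpace.single b (1 : ℂ)))
          (U k x' (EuclideanSpace.single b' (1 : ℂ))) : ℂ) = 0 ↔ x = x')) := by
  classical
  refine ⟨?_, ?_, ?_, ?_⟩
  · -- orthonormality
    intro k x
    exact (EuclideanSpace.orthonormal_single (𝕜 := ℂ) (ι := Fin (d k))).comp_linearIsometryEquiv
      (U k x)
  · -- injectivity
    intro a a' h
    exact congrArg Prod.fst h
  · -- orthogonality
    intro a a' hne
    have key : ∃ k, (w k fun j => a j) = (w k fun j => a' j) ∧ a k ≠ a' k := by
      by_contra hcon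
      push_neg at hcon
      obtain ⟨z, hz, huniq⟩ := hw (fun k y =>
        if y = w k (fun j => a j) then a k
        else if y = w k (fun j => a' j) then a' k else a k)
      have e1 : (fun k => w k fun j => a j) = z := by
        apply huniq
        funext k
        beta_reduce
        congr 1
        funext j
        simp
      have e2 : (fun k => w k fun j => a' j) = z := by
        apply huniq
        funext k
        beta_reduce
        congr 1
        funext j
        by_cases h : (w (j : Fin n) fun i => a' i) = (w (j : Fin n) fun i => a i)
        · simp [h, hcon (j : Fin n) h.symm]
        · simp [h]
      apply hne
      funext k
      exact hcon k (congrFun (e1.trans e2.symm) k)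
    obtain ⟨k, hxk, hak⟩ := key
    apply Finset.prod_eq_zero (Finset.mem_univ k)
    have hne' : ((a' k, w k fun j => a' j) : Fin (d k) × X k) ≠ (a k, w k fun j => a j) := by
      intro h
      injection h with h1 h2
      exact hak h1.symm
    exact (hU k (a' k) (a k) (w k fun j => a' j) (w k fun j => a j) hne').mpr
      ⟨hxk, hak⟩
  · -- unambiguity
    intro k b b' x x' _ _ hneq
    by_cases hbx : ((b', x') : Fin (d k) × X k) = (b, x)
    · injection hbx with h1 h2
      exact absurd (by rw [h1, h2]) hneq
    · have h := hU k b' b x' x hbx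
      constructor
      · intro h0; exact (h.mp h0).1
      · intro hxx
        refine h.mpr ⟨hxx, ?_⟩
        intro hbb
        exact hneq (by rw [hxx, hbb])

end
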